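/- arXiv:1507.02232 — 9 statements merged into one kernel-verified Lean document; each statement's English description precedes it below -/
import Mathlib

section
/- Let G be a group and define σ : G×G → G×G by σ(x,y) = (x·y⁻¹·x⁻¹, x·y²) (Wada's solution). Then (G,σ) is a biquandle whose associated map is s(x) = x⁻¹. In particular σ is bijective (with inverse σ⁻¹(u,v) = (u²v, v⁻¹u⁻¹v)), satisfies the Yang–Baxter equation, is non-degenerate, and for every x the unique y with σ(x,y) = (x,y) is y = x⁻¹. -/
/-- The map `σ × id` acting on the first two coordinates of `X × X × X`. -/
def mapL {X : Type*} (σ : X × X → X × X) : X × X × X → X × X × X :=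
  fun p => ((σ (p.1, p.2.1)).1, (σ (p.1, p.2.1)).2, p.2.2)

/-- The map `id × σ` acting on the last two coordinates of `X × X × X`. -/
def mapR {X : Type*} (σ : X × X → X × X) : X × X × X → X × X × X :=
  fun p => (p.1, σ p.2)

/-- The Yang–Baxter equation `(id×σ)(σ×id)(id×σ) = (σ×id)(id×σ)(σ×id)`. -/
def YBeq {X : Type*} (σ : X × X → X × X) : Prop :=
  mapR σ ∘ mapL σ ∘ mapR σ = mapL σ ∘ mapR σ ∘ mapL σ

/-- A set-theoretic solution of the Yang–Baxter equation. -/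
def IsYBSol {X : Type*} (σ : X × X → X × X) : Prop :=
  Function.Bijective σ ∧ YBeq σ

/-- Non-degeneracy (left and right invertibility). -/
def IsNondeg {X : Type*} (σ : X × X → X × X) : Prop :=
  (∀ x z : X, ∃! y : X, (σ (x, y)).1 = z) ∧
  (∀ y t : X, ∃! x : X, (σ (x, y)).2 = t)

/-- A birack: non-degenerate set-theoretic solution of the YBeq. -/
def IsBirack {X : Type*} (σ : X × X → X × X) : Prop :=
  IsYBSol σ ∧ IsNondeg σ

/-- A biquandle: a birack where every `x` has a unique `y` with `σ (x,y) = (x,y)`. -/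
def IsBiquandle {X : Type*} (σ : X × X → X × X) : Prop :=
  IsBirack σ ∧ ∀ x : X, ∃! y : X, σ (x, y) = (x, y)

/-- `s` is the associated map of a biquandle: `σ (x, s x) = (x, s x)`. -/
def IsAssocMap {X : Type*} (σ : X × X → X × X) (s : X → X) : Prop :=
  ∀ x : X, σ (x, s x) = (x, s x)

/-- A (braid) non-commutative 2-cocycle on `(X,σ)` with values in a group `H`. -/
def IsCocycle {X H : Type*} [Group H] (σ : X × X → X × X) (f : X × X → H) : Prop :=
  (∀ x y z : X, f (x, y) * f ((σ (x, y)).2, z) =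
      f (x, (σ (y, z)).1) * f ((σ (x, (σ (y, z)).1)).2, (σ (y, z)).2)) ∧
  (∀ x y z : X, f ((σ (x, y)).1, (σ ((σ (x, y)).2, z)).1) = f (y, z))

/-- Type I condition: `f (x, s x) = 1`. -/
def IsTypeI {X H : Type*} [Group H] (s : X → X) (f : X × X → H) : Prop :=
  ∀ x : X, f (x, s x) = 1

/-- Two 2-cocycles are cohomologous. -/
def Cohomologous {X H : Type*} [Group H] (σ : X × X → X × X) (s : X → X)
    (f f' : X × X → H) : Prop :=
  ∃ γ : X → H, (∀ x : X, γ x = γ (s x)) ∧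
    ∀ p : X × X, f' p = γ p.1 * f p * (γ (σ p).2)⁻¹

/-- Relations defining the universal non-commutative 2-cocycle group. -/
def UncRels {X : Type*} (σ : X × X → X × X) (s : X → X) : Set (FreeGroup (X × X)) :=
  {r | (∃ x y z : X, r = FreeGroup.of (x, y) * FreeGroup.of ((σ (x, y)).2, z) *
          (FreeGroup.of (x, (σ (y, z)).1) *
            FreeGroup.of ((σ (x, (σ (y, z)).1)).2, (σ (y, z)).2))⁻¹) ∨
       (∃ x y z : X, r = FreeGroup.of ((σ (x, y)).1, (σ ((σ (x, y)).2, z)).1) *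
          (FreeGroup.of (y, z))⁻¹) ∨
       (∃ x : X, r = FreeGroup.of (x, s x))}

/-- The universal non-commutative 2-cocycle group `U_nc(X,σ)`. -/
abbrev Unc {X : Type*} (σ : X × X → X × X) (s : X → X) : Type _ :=
  PresentedGroup (UncRels σ s)

/-- The universal 2-cocycle `π : X × X → U_nc(X,σ)`. -/
def UncPi {X : Type*} (σ : X × X → X × X) (s : X → X) : X × X → Unc σ s :=
  fun p => PresentedGroup.of (rels := UncRels σ s) p

/-- Wada's solution `σ(x,y) = (x y⁻¹ x⁻¹, x y²)` on a group `G` is a biquandle with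
associated map `s(x) = x⁻¹`; its inverse is `σ⁻¹(u,v) = (u² v, v⁻¹ u⁻¹ v)`, and for
each `x` the unique `y` with `σ(x,y) = (x,y)` is `y = x⁻¹`. -/
theorem wada_biquandle {G : Type*} [Group G] :
    IsBiquandle (fun p : G × G => (p.1 * p.2⁻¹ * p.1⁻¹, p.1 * p.2 ^ 2)) ∧
    IsAssocMap (fun p : G × G => (p.1 * p.2⁻¹ * p.1⁻¹, p.1 * p.2 ^ 2))
      (fun x : G => x⁻¹) ∧
    ((fun p : G × G => (p.1 * p.2⁻¹ * p.1⁻¹, p.1 * p.2 ^ 2)) ∘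
        (fun q : G × G => (q.1 ^ 2 * q.2, q.2⁻¹ * q.1⁻¹ * q.2)) = id ∧
      (fun q : G × G => (q.1 ^ 2 * q.2, q.2⁻¹ * q.1⁻¹ * q.2)) ∘
        (fun p : G × G => (p.1 * p.2⁻¹ * p.1⁻¹, p.1 * p.2 ^ 2)) = id) ∧
    (∀ x y : G,
      (fun p : G × G => (p.1 * p.2⁻¹ * p.1⁻¹, p.1 * p.2 ^ 2)) (x, y) = (x, y) →
        y = x⁻¹) := by
  set σ : G × G → G × G := fun p => (p.1 * p.2⁻¹ * p.1⁻¹, p.1 * p.2 ^ 2) with hσ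
  set τ : G × G → G × G := fun q => (q.1 ^ 2 * q.2, q.2⁻¹ * q.1⁻¹ * q.2) with hτ
  have hst : σ ∘ τ = id := by
    funext q; simp only [σ, τ, Function.comp_apply, id_eq, Prod.ext_iff]
    constructor <;> simp [pow_two, mul_assoc]
  have hts : τ ∘ σ = id := by
    funext p; simp only [σ, τ, Function.comp_apply, id_eq, Prod.ext_iff]
    constructor <;> simp [pow_two, mul_assoc]
  have hbij : Function.Bijective σ :=
    Function.bijective_iff_has_inverse.mpr
      ⟨τ, congrFun hts, congrFun hst⟩
  have hfix : ∀ x y : G, σ (x, y) = (x, y) → y = x⁻¹ := by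
    intro x y h
    have h1 : x * y⁻¹ * x⁻¹ = x := congrArg Prod.fst h
    have h2 : y⁻¹ = x := by
      have := congrArg (fun g => x⁻¹ * g * x) h1
      simpa [mul_assoc] using this
    rw [← h2, inv_inv]
  have hYB : YBeq σ := by
    unfold YBeq
    funext p
    obtain ⟨x, y, z⟩ := p
    simp only [mapL, mapR, σ, Function.comp_apply, Prod.ext_iff]
    refine ⟨?_, ?_, ?_⟩ <;> simp [pow_two, mul_assoc, mul_inv_rev]
  have hL : ∀ x z : G, ∃! y : G, (σ (x, y)).1 = z := by
    intro x z
    refine ⟨x⁻¹ * z⁻¹ * x, by simp only [σ]; group, ?_⟩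
    intro y hy
    simp only [σ] at hy
    have h2 : y⁻¹ = x⁻¹ * z * x := by
      rw [← hy]; group
    calc y = (y⁻¹)⁻¹ := by rw [inv_inv]
    _ = x⁻¹ * z⁻¹ * x := by rw [h2]; group
  have hR : ∀ y t : G, ∃! x : G, (σ (x, y)).2 = t := by
    intro y t
    refine ⟨t * (y ^ 2)⁻¹, by simp only [σ]; group, ?_⟩
    intro x hx
    simp only [σ] at hx
    rw [← hx]; group
  have hs : IsAssocMap σ (fun x : G => x⁻¹) := by
    intro x
    simp only [σ, Prod.ext_iff]
    constructor <;> group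
  refine ⟨⟨⟨⟨hbij, hYB⟩, hL, hR⟩, ?_⟩, hs, ⟨hst, hts⟩, hfix⟩
  intro x
  exact ⟨x⁻¹, hs x, fun y hy => hfix x y hy⟩
end

section
/- Let (X,◁) be a quandle and σ̄ : X×X → X×X the inverse of σ(x,y) = (y, x◁y), i.e. σ̄(x,y) = (y◁⁻¹x, x), a biquandle whose associated map is the identity. For a group H, a function f : X×X → H is a type I non-commutative 2-cocycle for (X,σ̄) if and only if it satisfies, for all x,y,z ∈ X: (Q̄1) f(x,y)·f(x,z) = f(x◁y,z)·f(x,y); (Q̄2) f(x◁y,x) = 1; (Q̄3) f(x◁z,y◁z) = f(x,y). -/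
/-- A rack structure given by a binary operation. -/
def IsRack {X : Type*} (op : X → X → X) : Prop :=
  (∀ x : X, Function.Bijective (fun y => op y x)) ∧
  ∀ x y z : X, op (op x y) z = op (op x z) (op y z)

/-- A quandle: a rack with `x ◁ x = x`. -/
def IsQuandle {X : Type*} (op : X → X → X) : Prop :=
  IsRack op ∧ ∀ x : X, op x x = x

/-- For a quandle `(X,◁)` and the inverse solution `σ̄(x,y) = (y ◁⁻¹ x, x)` (with
associated map the identity), a function `f : X × X → H` is a type I
non-commutative 2-cocycle iff it satisfies (Q̄1), (Q̄2), (Q̄3). -/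
theorem inverse_quandle_cocycle_iff {X H : Type*} [Group H]
    (op invop : X → X → X) (hq : IsQuandle op)
    (hinv : ∀ x y : X, op (invop y x) x = y ∧ invop (op y x) x = y)
    (f : X × X → H) :
    (IsCocycle (fun p : X × X => (invop p.2 p.1, p.1)) f ∧
        IsTypeI (id : X → X) f) ↔
      ((∀ x y z : X, f (x, y) * f (x, z) = f (op x y, z) * f (x, y)) ∧
        (∀ x y : X, f (op x y, x) = 1) ∧
        (∀ x y z : X, f (op x z, op y z) = f (x, y))) := by
  obtain ⟨_, hid⟩ := hq
  constructor
  · rintro ⟨⟨h1, h2⟩, ht⟩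
    have h1' : ∀ x y z : X, f (x, y) * f (x, z) = f (x, invop z y) * f (x, y) :=
      fun x y z => h1 x y z
    have h2' : ∀ x y z : X, f (invop y x, invop z x) = f (y, z) :=
      fun x y z => h2 x y z
    have q3 : ∀ x y z : X, f (op x z, op y z) = f (x, y) := by
      intro x y z
      have := h2' z (op x z) (op y z)
      rw [(hinv z x).2, (hinv z y).2] at this
      exact this.symm
    have q2 : ∀ x y : X, f (op x y, x) = 1 := by
      intro x y
      have h := h1' (op x y) y (op x y)
      have hiy : invop (op x y) y = x := (hinv y x).2
      rw [hiy] at h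
      have htt : f (op x y, op x y) = 1 := ht (op x y)
      rw [htt, mul_one] at h
      have h' : f (op x y, x) * f (op x y, y) = 1 * f (op x y, y) := by
        rw [one_mul]; exact h.symm
      exact mul_right_cancel h'
    refine ⟨?_, q2, q3⟩
    intro x y z
    have key : f (op x y, z) = f (x, invop z y) := by
      have := q3 x (invop z y) y
      rwa [(hinv y z).1] at this
    rw [key]; exact h1' x y z
  · rintro ⟨q1, q2, q3⟩
    have ht : IsTypeI (id : X → X) f := by
      intro x
      have := q2 x x
      rwa [hid x] at this
    refine ⟨⟨?_, ?_⟩, ht⟩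
    · intro x y z
      show f (x, y) * f (x, z) = f (x, invop z y) * f (x, y)
      have key : f (op x y, z) = f (x, invop z y) := by
        have := q3 x (invop z y) y
        rwa [(hinv y z).1] at this
      rw [← key]; exact q1 x y z
    · intro x y z
      show f (invop y x, invop z x) = f (y, z)
      have := q3 (invop y x) (invop z x) x
      rw [(hinv x y).1, (hinv x z).1] at this
      exact this.symm
end

section
/- Let (X,◁) be a quandle such that for all x,z ∈ X there exists y ∈ X with x◁y = z, and let H be a group. Then every function f : X×X → H satisfying, for all x,y,z ∈ X, (Q̄1) f(x,y)·f(x,z) = f(x◁y,z)·f(x,y), (Q̄2) f(x◁y,x) = 1, and (Q̄3) f(x◁z,y◁z) = f(x,y), is identically 1. Equivalently, every type I non-commutative 2-cocycle for the inverse solution σ̄(x,y) = (y◁⁻¹x, x) is trivial. -/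
/-- If the quandle `(X,◁)` satisfies: for all `x z` there is `y` with `x ◁ y = z`,
then every function satisfying (Q̄1), (Q̄2), (Q̄3) is identically `1`; equivalently,
every type I non-commutative 2-cocycle for the inverse solution
`σ̄(x,y) = (y ◁⁻¹ x, x)` is trivial. -/
theorem inverse_quandle_cocycle_trivial {X H : Type*} [Group H]
    (op invop : X → X → X) (hq : IsQuandle op)
    (hinv : ∀ x y : X, op (invop y x) x = y ∧ invop (op y x) x = y)
    (hsurj : ∀ x z : X, ∃ y : X, op x y = z) :
    (∀ f : X × X → H,
      ((∀ x y z : X, f (x, y) * f (x, z) = f (op x y, z) * f (x, y)) ∧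
        (∀ x y : X, f (op x y, x) = 1) ∧
        (∀ x y z : X, f (op x z, op y z) = f (x, y))) →
      ∀ p : X × X, f p = 1) ∧
    (∀ f : X × X → H,
      IsCocycle (fun p : X × X => (invop p.2 p.1, p.1)) f →
      IsTypeI (id : X → X) f →
      ∀ p : X × X, f p = 1) := by
  constructor
  · rintro f ⟨h1, h2, h3⟩ ⟨a, b⟩
    obtain ⟨y, hy⟩ := hsurj b a
    have := h2 b y
    rwa [hy] at this
  · rintro f ⟨c1, c2⟩ ht ⟨a, b⟩
    obtain ⟨y, hy⟩ := hsurj b a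
    have hi : invop a y = b := by
      have h := (hinv y b).2
      rwa [hy] at h
    have h := c1 a y a
    simp only [] at h
    have hta : f (a, a) = 1 := ht a
    rw [hta, mul_one, hi] at h
    exact right_eq_mul.mp h
end

section
/- Let R be a commutative ring, s,t ∈ R units such that c := (1−s·t)⁻¹ exists in R, M an R-module, and σ(x,y) = (s·y, t·x + (1−s·t)·y) the Alexander biquandle on M. Let H be a group and f : M×M → H a type I non-commutative 2-cocycle. Then the function γ : M → H, γ(x) = f(0, c·x), satisfies γ(x) = γ(s⁻¹·x) for all x, and the cohomologous cocycle f'(x,y) = γ(x)·f(x,y)·γ(σ²(x,y))⁻¹ satisfies f'(0,y) = 1 for all y ∈ M. In particular, every type I non-commutative 2-cocycle on (M,σ) is cohomologous to one vanishing on {0}×M. -/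
/-- The Alexander biquandle (Alexander switch) on an `R`-module `M`. -/
def alexSigma {R : Type*} [CommRing R] {M : Type*} [AddCommGroup M] [Module R M]
    (s t : Rˣ) : M × M → M × M :=
  fun p => ((s : R) • p.2, (t : R) • p.1 + (1 - (s : R) * (t : R)) • p.2)

/-- The associated map of the Alexander biquandle: `x ↦ s⁻¹ • x`. -/
def alexS {R : Type*} [CommRing R] {M : Type*} [AddCommGroup M] [Module R M]
    (s : Rˣ) : M → M :=
  fun x => (((s⁻¹ : Rˣ) : R)) • x

/-- For the Alexander biquandle with `c = (1 − st)⁻¹`: `γ(x) = f(0, c•x)` satisfies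
`γ(x) = γ(s⁻¹•x)`, the cohomologous cocycle `f'(x,y) = γ(x) f(x,y) γ(σ²(x,y))⁻¹`
vanishes on `{0} × M`; in particular every type I non-commutative 2-cocycle is
cohomologous to one vanishing on `{0} × M`. -/
theorem alexander_gamma_reduction {R : Type*} [CommRing R] (s t : Rˣ) (c : R)
    (hc : c * (1 - (s : R) * (t : R)) = 1)
    (M : Type*) [AddCommGroup M] [Module R M]
    {H : Type*} [Group H] (f : M × M → H)
    (hf : IsCocycle (alexSigma (M := M) s t) f)
    (hf1 : IsTypeI (alexS (M := M) s) f) :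
    (∀ x : M, f (0, c • x) = f (0, c • alexS (M := M) s x)) ∧
    (∀ y : M,
      f (0, c • (0 : M)) * f (0, y) *
        (f (0, c • (alexSigma (M := M) s t (0, y)).2))⁻¹ = 1) ∧
    ∃ f' : M × M → H,
      IsCocycle (alexSigma (M := M) s t) f' ∧
      IsTypeI (alexS (M := M) s) f' ∧
      Cohomologous (alexSigma (M := M) s t) (alexS (M := M) s) f f' ∧
      ∀ y : M, f' (0, y) = 1 := by
  -- auxiliary group identity
  have aux : ∀ (a G g h u v w q : H), u * v = w * q →
      a * u * g⁻¹ * (g * v * G⁻¹) = a * w * h⁻¹ * (h * q * G⁻¹) := by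
    intro a G g h u v w q huv
    simp only [mul_assoc, inv_mul_cancel_left]
    rw [← mul_assoc u v, ← mul_assoc w q, huv]
  have hss : ((s : R) * ((s⁻¹ : Rˣ) : R)) = 1 := by
    rw [← Units.val_mul, mul_inv_cancel, Units.val_one]
  -- scaling invariance of f
  have hscale : ∀ y z : M, f ((s : R) • y, (s : R) • z) = f (y, z) := by
    intro y z
    have h := hf.2 0 y z
    simpa [alexSigma] using h
  -- γ invariance under s-scaling
  have hγs : ∀ w : M, f (0, c • ((s : R) • w)) = f (0, c • w) := by
    intro w
    have h := hscale 0 (c • w)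
    rw [smul_zero] at h
    rw [← h]
    congr 1
    rw [smul_comm]
  have hγ : ∀ x : M, f (0, c • x) = f (0, c • alexS (M := M) s x) := by
    intro x
    have h := hγs (alexS (M := M) s x)
    rw [← h]
    congr 2
    simp [alexS, smul_smul, hss]
  have hf00 : f ((0 : M), (0 : M)) = 1 := by
    have h := hf1 0
    simpa [alexS] using h
  have hcy : ∀ y : M, c • ((1 - (s : R) * (t : R)) • y) = y := by
    intro y
    rw [smul_smul, hc, one_smul]
  refine ⟨hγ, ?_, ?_⟩
  · intro y
    rw [smul_zero, hf00, one_mul]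
    simp only [alexSigma, smul_zero, zero_add]
    rw [hcy, mul_inv_cancel]
  · set γ : M → H := fun x => f (0, c • x) with hγdef
    have hγsc : ∀ w : M, γ ((s : R) • w) = γ w := hγs
    refine ⟨fun p => γ p.1 * f p * (γ ((alexSigma (M := M) s t p).2))⁻¹, ⟨?_, ?_⟩, ?_, ?_, ?_⟩
    · -- cocycle condition (i)
      intro x y z
      simp only [alexSigma]
      have e1 := hf.1 x y z
      simp only [alexSigma] at e1
      have hM : (t : R) • ((t : R) • x + (1 - (s : R) * (t : R)) • ((s : R) • z)) +
          (1 - (s : R) * (t : R)) • ((t : R) • y + (1 - (s : R) * (t : R)) • z) =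
          (t : R) • ((t : R) • x + (1 - (s : R) * (t : R)) • y) +
          (1 - (s : R) * (t : R)) • z := by module
      rw [hM]
      exact aux _ _ _ _ _ _ _ _ e1
    · -- cocycle condition (ii)
      intro x y z
      simp only [alexSigma]
      have h1 : γ ((s : R) • y) = γ y := hγsc y
      have h2 : (t : R) • ((s : R) • y) + (1 - (s : R) * (t : R)) • ((s : R) • z) =
          (s : R) • ((t : R) • y + (1 - (s : R) * (t : R)) • z) := by module
      rw [h1, h2, hγsc, hscale]
    · -- type I
      intro x
      have hr : (1 - (s : R) * (t : R)) * ((s⁻¹ : Rˣ) : R) = ((s⁻¹ : Rˣ) : R) - (t : R) := by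
        linear_combination (-(t : R)) * hss
      have hfix : (t : R) • x + (1 - (s : R) * (t : R)) • alexS (M := M) s x =
          alexS (M := M) s x := by
        simp only [alexS, smul_smul]
        rw [← add_smul, hr, show (t : R) + (((s⁻¹ : Rˣ) : R) - (t : R)) = ((s⁻¹ : Rˣ) : R) from by ring]
      simp only [alexSigma]
      rw [hfix, hf1 x, mul_one]
      show f (0, c • x) * (f (0, c • alexS (M := M) s x))⁻¹ = 1
      rw [← hγ x, mul_inv_cancel]
    · exact ⟨γ, hγ, fun p => rfl⟩
    · intro y
      simp only [alexSigma, smul_zero, zero_add]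
      show γ 0 * f (0, y) * (γ ((1 - (s : R) * (t : R)) • y))⁻¹ = 1
      have : γ ((1 - (s : R) * (t : R)) • y) = f (0, y) := by
        show f (0, c • ((1 - (s : R) * (t : R)) • y)) = f (0, y)
        rw [hcy]
      rw [this]
      show f (0, c • (0 : M)) * f (0, y) * (f (0, y))⁻¹ = 1
      rw [smul_zero, hf00, one_mul, mul_inv_cancel]
end

section
/- Let p be an odd prime, X = ℤ/pℤ, and s,t ∈ ℤ/pℤ nonzero elements with s·t ≠ 1, and let σ(x,y) = (s·y, t·x + (1−s·t)·y) be the Alexander biquandle on X. Then for every group H, every type I non-commutative 2-cocycle f : X×X → H is cohomologous to the constant cocycle with value 1. In particular, every type I non-commutative 2-cocycle on the dihedral quandle solution D_3 (σ(x,y) = (y, 2y−x) on ℤ/3ℤ) is cohomologous to the trivial one. -/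
universe v

/-- Key lemma: a function satisfying the cocycle relation, the type I condition,
and triviality on `{0} × ZMod p` is identically `1`. -/
lemma key_triv {p : ℕ} [Fact p.Prime] {H : Type*} [Group H]
    (s t : ZMod p) (hs : s ≠ 0) (ht : t ≠ 0) (hst : s * t ≠ 1)
    (f : ZMod p × ZMod p → H)
    (h1 : ∀ x y z : ZMod p, f (x, y) * f (t*x + (1-s*t)*y, z)
        = f (x, s*z) * f (t*x + (1-s*t)*(s*z), t*y + (1-s*t)*z))
    (h3 : ∀ x : ZMod p, f (x, s⁻¹ * x) = 1)
    (h4 : ∀ y : ZMod p, f (0, y) = 1) :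
    ∀ q : ZMod p × ZMod p, f q = 1 := by
  haveI : NeZero p := ⟨(Fact.out : p.Prime).ne_zero⟩
  have hst' : (1 : ZMod p) - s * t ≠ 0 := sub_ne_zero.mpr (Ne.symm hst)
  set c : ZMod p := -t / ((1 - s*t) * s) with hc
  have hc0 : c ≠ 0 := by
    rw [hc]
    exact div_ne_zero (neg_ne_zero.mpr ht) (mul_ne_zero hst' hs)
  have hsc : (1 - s*t) * (s * c) = -t := by
    rw [hc]; field_simp
  have e0 : ∀ x : ZMod p, t*x + (1-s*t)*(s*(c*x)) = 0 := by
    intro x; linear_combination x * hsc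
  -- Step F'
  have hF : ∀ x y : ZMod p,
      f (x, y) * f (t*x + (1-s*t)*y, c*x) = f (x, s*(c*x)) := by
    intro x y
    have h := h1 x y (c*x)
    rw [e0 x, h4, mul_one] at h
    exact h
  -- Step G
  have hG : ∀ x u : ZMod p,
      f (x, s*(c*x)) = f (x, u) *
        f (t*x + (1-s*t)*u, t*(s*(c*x)) + (1-s*t)*(s⁻¹*u)) := by
    intro x u
    have h := h1 x (s*(c*x)) (s⁻¹*u)
    have eu : s*(s⁻¹*u) = u := by field_simp
    rw [e0 x, h4, mul_one, eu] at h
    exact h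
  -- Step H (combined)
  have hP' : ∀ x u : ZMod p,
      f (t*x + (1-s*t)*u, c*x)
        = f (t*x + (1-s*t)*u, c*x + s⁻¹*(t*x + (1-s*t)*u)) := by
    intro x u
    have hf := hF x u
    have hg := hG x u
    have ew : t*(s*(c*x)) + (1-s*t)*(s⁻¹*u)
        = c*x + s⁻¹*(t*x + (1-s*t)*u) := by
      linear_combination (-x*s⁻¹) * hsc - (x*c*(t*s - 1)) * mul_inv_cancel₀ hs
    rw [ew] at hg
    have h1' : f (t*x + (1-s*t)*u, c*x) = (f (x, u))⁻¹ * f (x, s*(c*x)) := by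
      rw [← hf]; group
    have h2' : (f (x, u))⁻¹ * f (x, s*(c*x))
        = f (t*x + (1-s*t)*u, c*x + s⁻¹*(t*x + (1-s*t)*u)) := by
      rw [hg]; group
    rw [h1', h2']
  have hP : ∀ A B : ZMod p, f (A, B) = f (A, B + s⁻¹*A) := by
    intro A B
    have h := hP' (B/c) ((A - t*(B/c))/(1-s*t))
    have e1 : c*(B/c) = B := by field_simp
    have e2 : t*(B/c) + (1-s*t)*((A - t*(B/c))/(1-s*t)) = A := by
      rw [mul_div_cancel₀ _ hst']; ring
    rw [e1, e2] at h
    exact h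
  have hQ : ∀ (k : ℕ) (A B : ZMod p),
      f (A, B) = f (A, B + (k : ZMod p) * (s⁻¹ * A)) := by
    intro k
    induction k with
    | zero => intro A B; simp
    | succ k ih =>
      intro A B
      have e : B + ((k+1 : ℕ) : ZMod p) * (s⁻¹*A)
          = (B + (k : ZMod p)*(s⁻¹*A)) + s⁻¹*A := by push_cast; ring
      rw [e, ih A B]
      exact hP A _
  rintro ⟨A, B⟩
  by_cases hA : A = 0
  · subst hA; exact h4 B
  · have hd : s⁻¹ * A ≠ 0 := mul_ne_zero (inv_ne_zero hs) hA
    obtain ⟨k, hk⟩ := ZMod.natCast_zmod_surjective (n := p) ((s⁻¹*A - B) / (s⁻¹*A))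
    have e : B + ((s⁻¹*A - B)/(s⁻¹*A)) * (s⁻¹*A) = s⁻¹*A := by
      field_simp
      ring
    rw [hQ k A B, hk, e]
    exact h3 A

/-- General form: for the Alexander biquandle on `ZMod p`, every type I
cocycle is cohomologous to the trivial one. -/
lemma alexander_cohomologous (p : ℕ) [Fact p.Prime]
    (s t : ZMod p) (hs : s ≠ 0) (ht : t ≠ 0) (hst : s * t ≠ 1)
    (H : Type*) [Group H] (f : ZMod p × ZMod p → H)
    (hcoc : IsCocycle
      (fun q : ZMod p × ZMod p => (s * q.2, t * q.1 + (1 - s * t) * q.2)) f)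
    (htyp : IsTypeI (fun x : ZMod p => s⁻¹ * x) f) :
    Cohomologous (fun q : ZMod p × ZMod p => (s * q.2, t * q.1 + (1 - s * t) * q.2))
      (fun x : ZMod p => s⁻¹ * x) f (fun _ => 1) := by
  have hst' : (1 : ZMod p) - s * t ≠ 0 := sub_ne_zero.mpr (Ne.symm hst)
  obtain ⟨hc1, hc2⟩ := hcoc
  have h1f : ∀ x y z : ZMod p, f (x, y) * f (t*x + (1-s*t)*y, z)
      = f (x, s*z) * f (t*x + (1-s*t)*(s*z), t*y + (1-s*t)*z) :=
    fun x y z => hc1 x y z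
  have h2f : ∀ y z : ZMod p, f (s*y, s*z) = f (y, z) := fun y z => hc2 0 y z
  have h3f : ∀ x : ZMod p, f (x, s⁻¹ * x) = 1 := htyp
  set γ : ZMod p → H := fun x => f (0, (1 - s*t)⁻¹ * x) with hγdef
  have hγs : ∀ x, γ (s * x) = γ x := by
    intro x
    show f (0, (1-s*t)⁻¹ * (s*x)) = f (0, (1-s*t)⁻¹ * x)
    have h := h2f 0 ((1-s*t)⁻¹ * x)
    rw [mul_zero] at h
    have e : (1-s*t)⁻¹ * (s*x) = s * ((1-s*t)⁻¹ * x) := by ring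
    rw [e]; exact h
  have hγ0 : γ 0 = 1 := by
    show f (0, (1-s*t)⁻¹ * 0) = 1
    have h := h3f 0
    rw [mul_zero] at h
    rw [mul_zero]
    exact h
  have hγinv : ∀ y, γ ((1-s*t) * y) = f (0, y) := by
    intro y
    show f (0, (1-s*t)⁻¹ * ((1-s*t)*y)) = f (0, y)
    rw [inv_mul_cancel_left₀ hst']
  have hγsinv : ∀ x, γ (s⁻¹ * x) = γ x := by
    intro x
    have ex : s*(s⁻¹*x) = x := by field_simp
    have h := hγs (s⁻¹*x)
    rw [ex] at h
    exact h.symm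
  set g : ZMod p × ZMod p → H :=
    fun q => γ q.1 * f q * (γ (t*q.1 + (1-s*t)*q.2))⁻¹ with hgdef
  have gh1 : ∀ x y z : ZMod p, g (x, y) * g (t*x + (1-s*t)*y, z)
      = g (x, s*z) * g (t*x + (1-s*t)*(s*z), t*y + (1-s*t)*z) := by
    intro x y z
    show (γ x * f (x, y) * (γ (t*x + (1-s*t)*y))⁻¹) *
        (γ (t*x + (1-s*t)*y) * f (t*x + (1-s*t)*y, z)
          * (γ (t*(t*x + (1-s*t)*y) + (1-s*t)*z))⁻¹)
      = (γ x * f (x, s*z) * (γ (t*x + (1-s*t)*(s*z)))⁻¹) *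
        (γ (t*x + (1-s*t)*(s*z)) * f (t*x + (1-s*t)*(s*z), t*y + (1-s*t)*z)
          * (γ (t*(t*x + (1-s*t)*(s*z)) + (1-s*t)*(t*y + (1-s*t)*z)))⁻¹)
    have earg : t*(t*x + (1-s*t)*y) + (1-s*t)*z
        = t*(t*x + (1-s*t)*(s*z)) + (1-s*t)*(t*y + (1-s*t)*z) := by ring
    rw [earg]
    have h := h1f x y z
    calc (γ x * f (x, y) * (γ (t*x + (1-s*t)*y))⁻¹) *
        (γ (t*x + (1-s*t)*y) * f (t*x + (1-s*t)*y, z)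
          * (γ (t*(t*x + (1-s*t)*(s*z)) + (1-s*t)*(t*y + (1-s*t)*z)))⁻¹)
        = γ x * (f (x, y) * f (t*x + (1-s*t)*y, z))
          * (γ (t*(t*x + (1-s*t)*(s*z)) + (1-s*t)*(t*y + (1-s*t)*z)))⁻¹ := by
          group
      _ = γ x * (f (x, s*z) * f (t*x + (1-s*t)*(s*z), t*y + (1-s*t)*z))
          * (γ (t*(t*x + (1-s*t)*(s*z)) + (1-s*t)*(t*y + (1-s*t)*z)))⁻¹ := by
          rw [h]
      _ = (γ x * f (x, s*z) * (γ (t*x + (1-s*t)*(s*z)))⁻¹) *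
        (γ (t*x + (1-s*t)*(s*z)) * f (t*x + (1-s*t)*(s*z), t*y + (1-s*t)*z)
          * (γ (t*(t*x + (1-s*t)*(s*z)) + (1-s*t)*(t*y + (1-s*t)*z)))⁻¹) := by
          group
  have gh3 : ∀ x : ZMod p, g (x, s⁻¹ * x) = 1 := by
    intro x
    show γ x * f (x, s⁻¹*x) * (γ (t*x + (1-s*t)*(s⁻¹*x)))⁻¹ = 1
    have e : t*x + (1-s*t)*(s⁻¹*x) = s⁻¹ * x := by
      field_simp; ring
    rw [e, h3f, mul_one, hγsinv]
    group
  have gh4 : ∀ y : ZMod p, g (0, y) = 1 := by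
    intro y
    show γ 0 * f (0, y) * (γ (t*0 + (1-s*t)*y))⁻¹ = 1
    have e : t*0 + (1-s*t)*y = (1-s*t)*y := by ring
    rw [hγ0, one_mul, e, hγinv]
    group
  have htriv := key_triv s t hs ht hst g gh1 gh3 gh4
  refine ⟨γ, fun x => (hγsinv x).symm, fun q => (htriv q).symm⟩

/-- For the Alexander biquandle on `ℤ/pℤ` (`p` an odd prime, `s, t ≠ 0`, `st ≠ 1`),
every type I non-commutative 2-cocycle is cohomologous to the constant cocycle `1`;
in particular this holds for the dihedral quandle solution `D_3` on `ℤ/3ℤ`. -/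
theorem alexander_zmod_p_cocycles_trivial (p : ℕ) [Fact p.Prime] (hodd : p ≠ 2)
    (s t : ZMod p) (hs : s ≠ 0) (ht : t ≠ 0) (hst : s * t ≠ 1) :
    (∀ (H : Type v) [Group H] (f : ZMod p × ZMod p → H),
      IsCocycle (fun q : ZMod p × ZMod p =>
        (s * q.2, t * q.1 + (1 - s * t) * q.2)) f →
      IsTypeI (fun x : ZMod p => s⁻¹ * x) f →
      Cohomologous (fun q : ZMod p × ZMod p =>
        (s * q.2, t * q.1 + (1 - s * t) * q.2)) (fun x : ZMod p => s⁻¹ * x)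
        f (fun _ => 1)) ∧
    (∀ (H : Type v) [Group H] (f : ZMod 3 × ZMod 3 → H),
      IsCocycle (fun q : ZMod 3 × ZMod 3 => (q.2, 2 * q.2 - q.1)) f →
      IsTypeI (id : ZMod 3 → ZMod 3) f →
      Cohomologous (fun q : ZMod 3 × ZMod 3 => (q.2, 2 * q.2 - q.1))
        (id : ZMod 3 → ZMod 3) f (fun _ => 1)) := by
  constructor
  · intro H _ f hcoc htyp
    exact alexander_cohomologous p s t hs ht hst H f hcoc htyp
  · intro H _ f hcoc htyp
    have hσ : (fun q : ZMod 3 × ZMod 3 =>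
        ((1 : ZMod 3) * q.2, 2 * q.1 + (1 - 1 * 2) * q.2))
        = (fun q : ZMod 3 × ZMod 3 => (q.2, 2 * q.2 - q.1)) := by
      funext q
      revert q
      decide
    have hs3 : (1 : ZMod 3) ≠ 0 := by decide
    have ht3 : (2 : ZMod 3) ≠ 0 := by decide
    have hst3 : (1 : ZMod 3) * 2 ≠ 1 := by decide
    haveI : Fact (Nat.Prime 3) := ⟨Nat.prime_three⟩
    have hsm : (fun x : ZMod 3 => (1 : ZMod 3)⁻¹ * x) = (id : ZMod 3 → ZMod 3) := by
      funext x
      rw [inv_one, one_mul, id_eq]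
    have hcoc' : IsCocycle (fun q : ZMod 3 × ZMod 3 =>
        ((1 : ZMod 3) * q.2, 2 * q.1 + (1 - 1 * 2) * q.2)) f := by
      rw [hσ]; exact hcoc
    have htyp' : IsTypeI (fun x : ZMod 3 => (1 : ZMod 3)⁻¹ * x) f := by
      rw [hsm]; exact htyp
    have h := alexander_cohomologous 3 1 2 hs3 ht3 hst3 H f hcoc' htyp'
    rw [hσ, hsm] at h
    exact h
end

section
/- Let X be a set with exactly three elements and σ : X×X → X×X the flip σ(x,y) = (y,x), a biquandle whose associated map is the identity. Then U_nc(X,σ) is isomorphic to the free product (ℤ×ℤ) * (ℤ×ℤ) * (ℤ×ℤ) of three copies of the free abelian group of rank 2. -/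
namespace UFA

variable {X : Type}

abbrev σf (X : Type) : X × X → X × X := fun p => (p.2, p.1)
abbrev U (X : Type) := Unc (σf X) (id : X → X)
abbrev piU (X : Type) : X × X → U X := UncPi (σf X) id

theorem pi_diag (x : X) : piU X (x, x) = 1 := by
  have h : FreeGroup.of (x, x) ∈ UncRels (σf X) (id : X → X) :=
    Or.inr (Or.inr ⟨x, rfl⟩)
  exact (QuotientGroup.eq_one_iff _).mpr (Subgroup.subset_normalClosure h)

theorem pi_comm (x y z : X) :
    piU X (x, y) * piU X (x, z) = piU X (x, z) * piU X (x, y) := by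
  have h : (FreeGroup.of (x, y) * FreeGroup.of (x, z) *
      (FreeGroup.of (x, z) * FreeGroup.of (x, y))⁻¹) ∈ UncRels (σf X) (id : X → X) :=
    Or.inl ⟨x, y, z, rfl⟩
  have h2 : piU X (x, y) * piU X (x, z) * (piU X (x, z) * piU X (x, y))⁻¹ = 1 :=
    (QuotientGroup.eq_one_iff _).mpr (Subgroup.subset_normalClosure h)
  exact mul_inv_eq_one.mp h2


open Monoid

abbrev G3 := Monoid.CoprodI (fun _ : Fin 3 => Multiplicative (ℤ × ℤ))

def g : Fin 3 → Multiplicative (ℤ × ℤ) :=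
  ![1, Multiplicative.ofAdd (1, 0), Multiplicative.ofAdd (0, 1)]

variable (e : X ≃ Fin 3)

def F : X × X → G3 := fun p => Monoid.CoprodI.of (i := e p.1) (g (e p.2 - e p.1))

theorem F_rels : ∀ r ∈ UncRels (σf X) (id : X → X), FreeGroup.lift (F e) r = 1 := by
  rintro r (⟨x, y, z, rfl⟩ | ⟨x, y, z, rfl⟩ | ⟨x, rfl⟩)
  · simp only [map_mul, map_inv, FreeGroup.lift_apply_of]
    rw [mul_inv_eq_one]
    show F e (x, y) * F e (x, z) = F e (x, z) * F e (x, y)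
    unfold F
    rw [← map_mul, ← map_mul, mul_comm]
  · simp only [map_mul, map_inv, FreeGroup.lift_apply_of]
    simp
  · simp only [FreeGroup.lift_apply_of]
    show F e (x, x) = 1
    simp [F, g, sub_self]

def φ : U X →* G3 := PresentedGroup.toGroup (F_rels e)

def uu (i : Fin 3) : U X := piU X (e.symm i, e.symm (i + 1))
def vv (i : Fin 3) : U X := piU X (e.symm i, e.symm (i + 2))

theorem uv_comm (i : Fin 3) : Commute (uu e i) (vv e i) := pi_comm _ _ _

def hcomp (i : Fin 3) : Multiplicative (ℤ × ℤ) →* U X :=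
  MonoidHom.mk' (fun a => uu e i ^ a.toAdd.1 * vv e i ^ a.toAdd.2) (by
    intro a b
    show uu e i ^ (a.toAdd + b.toAdd).1 * vv e i ^ (a.toAdd + b.toAdd).2 = _
    have c := uv_comm e i
    rw [Prod.fst_add, Prod.snd_add, zpow_add, zpow_add]
    exact (c.zpow_zpow b.toAdd.1 a.toAdd.2).mul_mul_mul_comm _ _)

def ψ : G3 →* U X := Monoid.CoprodI.lift (fun i => hcomp e i)


theorem phi_pi (p : X × X) : φ e (piU X p) = F e p := PresentedGroup.toGroup.of _

theorem psi_of (i : Fin 3) (a : Multiplicative (ℤ × ℤ)) :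
    ψ e (Monoid.CoprodI.of (i := i) a) = hcomp e i a := Monoid.CoprodI.lift_of _ _

theorem phi_uu (i : Fin 3) :
    φ e (uu e i) = Monoid.CoprodI.of (i := i) (Multiplicative.ofAdd ((1 : ℤ), (0 : ℤ))) := by
  rw [uu, phi_pi]
  simp [F, g, add_sub_cancel_left]

theorem phi_vv (i : Fin 3) :
    φ e (vv e i) = Monoid.CoprodI.of (i := i) (Multiplicative.ofAdd ((0 : ℤ), (1 : ℤ))) := by
  rw [vv, phi_pi]
  simp [F, g, add_sub_cancel_left]

theorem comp1 : (ψ e).comp (φ e) = MonoidHom.id (U X) := by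
  apply PresentedGroup.ext
  rintro ⟨x, y⟩
  simp only [MonoidHom.comp_apply, MonoidHom.id_apply]
  show ψ e (φ e (piU X (x, y))) = piU X (x, y)
  rw [phi_pi]
  show ψ e (Monoid.CoprodI.of (i := e x) (g (e y - e x))) = piU X (x, y)
  have key : ∀ d : Fin 3, d = 0 ∨ d = 1 ∨ d = 2 := by decide
  rcases key (e y - e x) with h | h | h
  · have hxy : y = x := e.injective (by rw [sub_eq_zero] at h; exact h)
    subst hxy
    rw [h, psi_of]
    show hcomp e (e y) 1 = piU X (y, y)
    rw [map_one, pi_diag]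
  · have h2 : e y = e x + 1 := by rw [← h]; abel
    have hy : y = e.symm (e x + 1) := by rw [← h2, Equiv.symm_apply_apply]
    rw [h, psi_of]
    show hcomp e (e x) (Multiplicative.ofAdd ((1 : ℤ), (0 : ℤ))) = piU X (x, y)
    show uu e (e x) ^ (1 : ℤ) * vv e (e x) ^ (0 : ℤ) = piU X (x, y)
    rw [zpow_one, zpow_zero, mul_one, uu, Equiv.symm_apply_apply, ← hy]
  · have h2 : e y = e x + 2 := by rw [← h]; abel
    have hy : y = e.symm (e x + 2) := by rw [← h2, Equiv.symm_apply_apply]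
    rw [h, psi_of]
    show hcomp e (e x) (Multiplicative.ofAdd ((0 : ℤ), (1 : ℤ))) = piU X (x, y)
    show uu e (e x) ^ (0 : ℤ) * vv e (e x) ^ (1 : ℤ) = piU X (x, y)
    rw [zpow_one, zpow_zero, one_mul, vv, Equiv.symm_apply_apply, ← hy]

theorem comp2 : (φ e).comp (ψ e) = MonoidHom.id G3 := by
  apply Monoid.CoprodI.ext_hom
  intro i
  refine MonoidHom.ext fun a => ?_
  simp only [MonoidHom.comp_apply, MonoidHom.id_apply]
  rw [psi_of]
  rw [show hcomp e i a = uu e i ^ a.toAdd.1 * vv e i ^ a.toAdd.2 from rfl]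
  rw [map_mul, map_zpow, map_zpow, phi_uu, phi_vv]
  have ha : a = Multiplicative.ofAdd ((1 : ℤ), (0 : ℤ)) ^ a.toAdd.1 *
      Multiplicative.ofAdd ((0 : ℤ), (1 : ℤ)) ^ a.toAdd.2 := by
    apply Multiplicative.toAdd.injective
    simp [Prod.ext_iff]
  conv_rhs => rw [ha]
  rw [map_mul, map_zpow, map_zpow]

end UFA

/-- For the flip biquandle on a three-element set, `U_nc` is the free product of
three copies of `ℤ × ℤ`. -/
theorem unc_flip_three (X : Type) [Fintype X] (hX : Fintype.card X = 3) :
    Nonempty (Unc (fun p : X × X => (p.2, p.1)) (id : X → X) ≃*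
      Monoid.CoprodI (fun _ : Fin 3 => Multiplicative (ℤ × ℤ))) := by
  have e : X ≃ Fin 3 := Fintype.equivFinOfCardEq hX
  exact ⟨MonoidHom.toMulEquiv (UFA.φ e) (UFA.ψ e) (UFA.comp1 e) (UFA.comp2 e)⟩
end

section
/- Let X = ℤ/3ℤ and σ(x,y) = (−y, x−y) (Wada's biquandle on ℤ/3ℤ, whose associated map is s(x) = −x). Then U_nc(X,σ) is isomorphic to ℤ (the infinite cyclic group). -/
namespace UncWadaAux

abbrev σw : ZMod 3 × ZMod 3 → ZMod 3 × ZMod 3 := fun q => (-q.2, q.1 - q.2)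
abbrev sw : ZMod 3 → ZMod 3 := fun x => -x

def w : ZMod 3 × ZMod 3 → ℤ := fun p =>
  if p = (0,1) ∨ p = (0,2) then 1 else if p = (1,1) ∨ p = (2,2) then -1 else 0

def fφ : ZMod 3 × ZMod 3 → Multiplicative ℤ := fun p => Multiplicative.ofAdd (w p)

lemma key1 : ∀ x y z : ZMod 3,
    w (x, y) + w (x - y, z) + -(w (x, -z) + w (x - -z, y - z)) = 0 := by decide

lemma key2 : ∀ y z : ZMod 3, w (-y, -z) + -w (y, z) = 0 := by decide

lemma key3 : ∀ x : ZMod 3, w (x, -x) = 0 := by decide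

lemma rels_lift : ∀ r ∈ UncRels σw sw, FreeGroup.lift fφ r = 1 := by
  rintro r (⟨x, y, z, rfl⟩ | ⟨x, y, z, rfl⟩ | ⟨x, rfl⟩) <;>
    simp only [map_mul, map_inv, FreeGroup.lift_apply_of, fφ, σw, sw, ← ofAdd_add, ← ofAdd_neg] <;>
    rw [ofAdd_eq_one]
  · exact key1 x y z
  · exact key2 y z
  · exact key3 x

/-- the universal cocycle, abbreviated -/
noncomputable def π : ZMod 3 × ZMod 3 → Unc σw sw := UncPi σw sw

lemma rel_one {r : FreeGroup (ZMod 3 × ZMod 3)} (hr : r ∈ UncRels σw sw) :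
    PresentedGroup.mk (UncRels σw sw) r = 1 :=
  (QuotientGroup.eq_one_iff r).2 (Subgroup.subset_normalClosure hr)

lemma relA (x y z : ZMod 3) :
    π (x, y) * π (x - y, z) = π (x, -z) * π (x - -z, y - z) := by
  have := rel_one (Or.inl ⟨x, y, z, rfl⟩)
  simp only [map_mul, map_inv, mul_inv_eq_one] at this
  exact this

lemma relB (y z : ZMod 3) : π (-y, -z) = π (y, z) := by
  have := rel_one (Or.inr (Or.inl ⟨0, y, z, rfl⟩))
  simp only [map_mul, map_inv, mul_inv_eq_one] at this
  exact this

lemma relC (x : ZMod 3) : π (x, -x) = 1 := rel_one (Or.inr (Or.inr ⟨x, rfl⟩))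

lemma pi00 : π (0, 0) = 1 := by
  have := relC 0; rwa [show (-(0 : ZMod 3)) = 0 from by decide] at this

lemma pi12 : π (1, 2) = 1 := by
  have := relC 1; rwa [show (-(1 : ZMod 3)) = 2 from by decide] at this

lemma pi21 : π (2, 1) = 1 := by
  have := relC 2; rwa [show (-(2 : ZMod 3)) = 1 from by decide] at this

lemma pi20 : π (2, 0) = 1 := by
  have h := relA 0 1 0
  rw [show ((0 : ZMod 3) - 1) = 2 from by decide, show (-(0 : ZMod 3)) = 0 from by decide,
    show ((0 : ZMod 3) - 0) = 0 from by decide, show ((1 : ZMod 3) - 0) = 1 from by decide,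
    pi00, one_mul] at h
  exact mul_left_cancel (h.trans (mul_one _).symm)

lemma pi10 : π (1, 0) = 1 := by
  have h := relB 2 0
  rw [show (-(2 : ZMod 3)) = 1 from by decide, show (-(0 : ZMod 3)) = 0 from by decide] at h
  rw [h, pi20]

lemma pi02 : π (0, 2) = π (0, 1) := by
  have h := relB 0 1
  rwa [show (-(0 : ZMod 3)) = 0 from by decide, show (-(1 : ZMod 3)) = 2 from by decide] at h

lemma pi11 : π (1, 1) = (π (0, 1))⁻¹ := by
  have h := relA 1 1 1
  rw [show ((1 : ZMod 3) - 1) = 0 from by decide, show (-(1 : ZMod 3)) = 2 from by decide,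
    show ((1 : ZMod 3) - 2) = 2 from by decide, pi12, pi20, one_mul] at h
  rw [eq_inv_iff_mul_eq_one, h]

lemma pi22 : π (2, 2) = (π (0, 1))⁻¹ := by
  have h := relB 1 1
  rw [show (-(1 : ZMod 3)) = 2 from by decide] at h
  rw [h, pi11]

lemma cases3 (a : ZMod 3) : a = 0 ∨ a = 1 ∨ a = 2 := by revert a; decide

lemma pipow (a b : ZMod 3) : π (a, b) = π (0, 1) ^ w (a, b) := by
  rcases cases3 a with rfl | rfl | rfl <;> rcases cases3 b with rfl | rfl | rfl
  · rw [show w (0, 0) = 0 from by decide, zpow_zero, pi00]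
  · rw [show w (0, 1) = 1 from by decide, zpow_one]
  · rw [show w (0, 2) = 1 from by decide, zpow_one, pi02]
  · rw [show w (1, 0) = 0 from by decide, zpow_zero, pi10]
  · rw [show w (1, 1) = -1 from by decide, zpow_neg_one, pi11]
  · rw [show w (1, 2) = 0 from by decide, zpow_zero, pi12]
  · rw [show w (2, 0) = 0 from by decide, zpow_zero, pi20]
  · rw [show w (2, 1) = 0 from by decide, zpow_zero, pi21]
  · rw [show w (2, 2) = -1 from by decide, zpow_neg_one, pi22]

end UncWadaAux

/-- For Wada's biquandle `σ(x,y) = (−y, x−y)` on `ℤ/3ℤ` (associated map `s(x) = −x`),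
`U_nc` is infinite cyclic. -/
theorem unc_wada_zmod3 :
    Nonempty (Unc (fun q : ZMod 3 × ZMod 3 => (-q.2, q.1 - q.2))
      (fun x : ZMod 3 => -x) ≃* Multiplicative ℤ) := by
  open UncWadaAux in
  refine ⟨MonoidHom.toMulEquiv (PresentedGroup.toGroup rels_lift)
    (zpowersHom _ (π (0, 1))) ?_ ?_⟩
  · apply PresentedGroup.ext
    rintro ⟨a, b⟩
    rw [MonoidHom.comp_apply, MonoidHom.id_apply]
    show zpowersHom _ (π (0, 1)) (PresentedGroup.toGroup rels_lift (PresentedGroup.of (a, b)))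
      = π (a, b)
    rw [PresentedGroup.toGroup.of, fφ, zpowersHom_apply, toAdd_ofAdd]
    exact (pipow a b).symm
  · apply MonoidHom.ext_mint
    rw [MonoidHom.comp_apply, MonoidHom.id_apply, zpowersHom_apply, toAdd_ofAdd, zpow_one]
    show PresentedGroup.toGroup rels_lift (π (0, 1)) = _
    rw [π, UncPi, PresentedGroup.toGroup.of]
    rfl
end

section
/- Let X = ℤ/3ℤ and σ̄(x,y) = (y−x, −x) (the inverse of Wada's biquandle σ(x,y) = (−y, x−y) on ℤ/3ℤ; its associated map is s(x) = −x). Then U_nc(X,σ̄) is isomorphic to ℤ/3ℤ (the cyclic group of order 3). -/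
namespace UncWadaAux

abbrev σ0 : ZMod 3 × ZMod 3 → ZMod 3 × ZMod 3 := fun q => (q.2 - q.1, -q.1)
abbrev s0 : ZMod 3 → ZMod 3 := fun x => -x
abbrev R : Set (FreeGroup (ZMod 3 × ZMod 3)) := UncRels σ0 s0
abbrev G := Unc σ0 s0
abbrev P : ZMod 3 × ZMod 3 → G := fun p => PresentedGroup.of p

lemma mk_rel {r : FreeGroup (ZMod 3 × ZMod 3)} (h : r ∈ R) :
    PresentedGroup.mk R r = 1 :=
  (QuotientGroup.eq_one_iff r).mpr (Subgroup.subset_normalClosure h)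

lemma rel1 (x y z : ZMod 3) :
    P (x, y) * P (-x, z) = P (x, z - y) * P (-x, -y) := by
  have h := mk_rel (Or.inl ⟨x, y, z, rfl⟩)
  simp only [map_mul, map_inv, σ0] at h
  exact mul_inv_eq_one.mp h

lemma rel2 (x y z : ZMod 3) : P (y - x, z + x) = P (y, z) := by
  have h := mk_rel (Or.inr (Or.inl ⟨x, y, z, rfl⟩))
  simp only [map_mul, map_inv, σ0, sub_neg_eq_add] at h
  exact mul_inv_eq_one.mp h

lemma rel3 (x : ZMod 3) : P (x, -x) = 1 := mk_rel (Or.inr (Or.inr ⟨x, rfl⟩))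

abbrev E : ZMod 3 → G := fun a => P (0, a)
abbrev g : G := E 1

lemma hsum (a b : ZMod 3) : P (a, b) = E (a + b) := by
  have := rel2 a a b
  simp only [sub_self] at this
  rw [← this, add_comm]

lemma hE0 : E 0 = 1 := by simpa using rel3 0

lemma key (y z : ZMod 3) : E y * E z = E (z - y) * E (-y) := by
  have := rel1 0 y z
  simpa using this

lemma hEneg1 : E (-1) = g * g := by
  have h := key 1 1
  rw [sub_self, hE0, one_mul] at h
  exact h.symm

lemma hE2 : E 2 = g * g := by
  rw [show (2 : ZMod 3) = -1 by decide]; exact hEneg1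

lemma hg3 : g ^ 3 = 1 := by
  have h := key 1 0
  rw [hE0, mul_one, zero_sub, hEneg1] at h
  have h4 : g * g * (g * g) = g ^ 4 := by
    rw [show (4 : ℕ) = 2 + 2 from rfl, pow_add, pow_two]
  rw [h4] at h
  have h5 : g ^ 3 * g = 1 * g := by rw [← pow_succ, one_mul]; exact h.symm
  exact mul_right_cancel h5

lemma hE (a : ZMod 3) : E a = g ^ a.val := by
  have h3 : ∀ b : ZMod 3, b = 0 ∨ b = 1 ∨ b = 2 := by decide
  rcases h3 a with rfl | rfl | rfl
  · rw [hE0]; rfl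
  · rw [show (1 : ZMod 3).val = 1 from rfl, pow_one]
  · rw [hE2, show (2 : ZMod 3).val = 2 from rfl, pow_two]

lemma hP (p : ZMod 3 × ZMod 3) : P p = g ^ (p.1 + p.2).val := by
  rw [show p = (p.1, p.2) from rfl, hsum, hE]

lemma hrels : ∀ r ∈ R, FreeGroup.lift
    (fun p : ZMod 3 × ZMod 3 => Multiplicative.ofAdd (p.1 + p.2)) r = 1 := by
  rintro r (⟨x, y, z, rfl⟩ | ⟨x, y, z, rfl⟩ | ⟨x, rfl⟩)
  · simp only [map_mul, map_inv, FreeGroup.lift_apply_of]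
    revert x y z; decide
  · simp only [map_mul, map_inv, FreeGroup.lift_apply_of]
    revert x y z; decide
  · simp only [FreeGroup.lift_apply_of]
    revert x; decide

noncomputable abbrev φ : G →* Multiplicative (ZMod 3) := PresentedGroup.toGroup hrels

lemma φ_g : φ g = Multiplicative.ofAdd 1 := by
  show φ (PresentedGroup.of (0, 1)) = _
  rw [PresentedGroup.toGroup.of]
  norm_num

lemma mem_zpowers (u : G) : u ∈ Subgroup.zpowers g :=
  PresentedGroup.generated_by R (Subgroup.zpowers g)
    (fun j => by rw [show PresentedGroup.of j = P j from rfl, hP]; exact Subgroup.pow_mem _ (Subgroup.mem_zpowers g) _) u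

lemma φ_bij : Function.Bijective φ := by
  constructor
  · rw [injective_iff_map_eq_one]
    intro u hu
    obtain ⟨m, rfl⟩ := Subgroup.mem_zpowers_iff.mp (mem_zpowers u)
    rw [map_zpow, φ_g] at hu
    have h1 : Multiplicative.ofAdd ((m : ZMod 3)) = 1 := by
      rw [← hu, ← ofAdd_zsmul]
      norm_num
    have hm : ((m : ZMod 3)) = 0 := by simpa using h1
    have hdvd : (3 : ℤ) ∣ m := (ZMod.intCast_zmod_eq_zero_iff_dvd m 3).mp hm
    obtain ⟨k, rfl⟩ := hdvd
    rw [zpow_mul, show ((3 : ℤ)) = ((3 : ℕ) : ℤ) from rfl, zpow_natCast, hg3, one_zpow]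
  · intro c
    refine ⟨g ^ (Multiplicative.toAdd c).val, ?_⟩
    rw [map_pow, φ_g, ← ofAdd_nsmul]
    simp [nsmul_eq_mul, ZMod.natCast_val, ZMod.cast_id]

end UncWadaAux

/-- For the inverse of Wada's biquandle, `σ̄(x,y) = (y−x, −x)` on `ℤ/3ℤ`
(associated map `s(x) = −x`), `U_nc` is cyclic of order 3. -/
theorem unc_wada_inverse_zmod3 :
    Nonempty (Unc (fun q : ZMod 3 × ZMod 3 => (q.2 - q.1, -q.1))
      (fun x : ZMod 3 => -x) ≃* Multiplicative (ZMod 3)) := by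
  exact ⟨MulEquiv.ofBijective UncWadaAux.φ UncWadaAux.φ_bij⟩
end

section
/- Let X = ℤ/3ℤ and σ(x,y) = (y, 2y−x) (the biquandle coming from the dihedral quandle D_3, whose associated map is the identity). Then U_nc(X,σ) is isomorphic to the free group on two generators. -/
namespace UncD3

abbrev σ3 : ZMod 3 × ZMod 3 → ZMod 3 × ZMod 3 := fun q => (q.2, 2 * q.2 - q.1)

def X0 : FreeGroup (Fin 2) := FreeGroup.of 0
def X1 : FreeGroup (Fin 2) := FreeGroup.of 1

def F : ZMod 3 × ZMod 3 → FreeGroup (Fin 2) := fun p =>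
  if p = (0,1) then X0
  else if p = (0,2) then X0 * X1⁻¹
  else if p = (1,0) then X1
  else if p = (1,2) then X1 * X0⁻¹
  else if p = (2,0) then X1⁻¹
  else if p = (2,1) then X0⁻¹
  else 1

lemma F_rel : ∀ x y z : ZMod 3,
    F (x, y) * F (2*y - x, z) = F (x, z) * F (2*z - x, 2*z - y) := by decide

lemma F_diag : ∀ x : ZMod 3, F (x, x) = 1 := by decide

lemma lift_rels : ∀ r ∈ UncRels σ3 (id : ZMod 3 → ZMod 3), FreeGroup.lift F r = 1 := by
  rintro r (⟨x, y, z, rfl⟩ | ⟨x, y, z, rfl⟩ | ⟨x, rfl⟩) <;>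
    simp only [map_mul, map_inv, FreeGroup.lift_apply_of, id_eq]
  · exact mul_inv_eq_one.mpr (F_rel x y z)
  · exact mul_inv_eq_one.mpr rfl
  · exact F_diag x

def φ : Unc σ3 (id : ZMod 3 → ZMod 3) →* FreeGroup (Fin 2) :=
  PresentedGroup.toGroup lift_rels

def ψ : FreeGroup (Fin 2) →* Unc σ3 (id : ZMod 3 → ZMod 3) :=
  FreeGroup.lift (fun i => if i = 0 then PresentedGroup.of (0, 1) else PresentedGroup.of (1, 0))

lemma of_rel : ∀ x y z : ZMod 3,
    (PresentedGroup.of (rels := UncRels σ3 (id : ZMod 3 → ZMod 3)) (x, y)) *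
      PresentedGroup.of (2*y - x, z) =
    PresentedGroup.of (x, z) * PresentedGroup.of (2*z - x, 2*z - y) := by
  intro x y z
  have hr : (FreeGroup.of (x, y) * FreeGroup.of (2*y - x, z) *
      (FreeGroup.of (x, z) * FreeGroup.of (2*z - x, 2*z - y))⁻¹) ∈
      UncRels σ3 (id : ZMod 3 → ZMod 3) := Or.inl ⟨x, y, z, rfl⟩
  have h1 : (QuotientGroup.mk (FreeGroup.of (x, y) * FreeGroup.of (2*y - x, z) *
      (FreeGroup.of (x, z) * FreeGroup.of (2*z - x, 2*z - y))⁻¹) :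
      Unc σ3 (id : ZMod 3 → ZMod 3)) = 1 :=
    (QuotientGroup.eq_one_iff _).mpr (Subgroup.subset_normalClosure hr)
  have h2 := h1
  rw [QuotientGroup.mk_mul, QuotientGroup.mk_mul, QuotientGroup.mk_inv,
    QuotientGroup.mk_mul, mul_inv_eq_one] at h2
  exact h2

lemma of_diag : ∀ x : ZMod 3,
    (PresentedGroup.of (rels := UncRels σ3 (id : ZMod 3 → ZMod 3)) (x, x)) = 1 := by
  intro x
  have hr : (FreeGroup.of (x, x)) ∈ UncRels σ3 (id : ZMod 3 → ZMod 3) :=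
    Or.inr (Or.inr ⟨x, rfl⟩)
  exact (QuotientGroup.eq_one_iff _).mpr (Subgroup.subset_normalClosure hr)

lemma ψF : ∀ p : ZMod 3 × ZMod 3,
    ψ (F p) = PresentedGroup.of (rels := UncRels σ3 (id : ZMod 3 → ZMod 3)) p := by
  set a := PresentedGroup.of (rels := UncRels σ3 (id : ZMod 3 → ZMod 3)) ((0 : ZMod 3), (1 : ZMod 3)) with ha'
  set b := PresentedGroup.of (rels := UncRels σ3 (id : ZMod 3 → ZMod 3)) ((0 : ZMod 3), (2 : ZMod 3)) with hb'
  set c := PresentedGroup.of (rels := UncRels σ3 (id : ZMod 3 → ZMod 3)) ((1 : ZMod 3), (0 : ZMod 3)) with hc'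
  set d := PresentedGroup.of (rels := UncRels σ3 (id : ZMod 3 → ZMod 3)) ((1 : ZMod 3), (2 : ZMod 3)) with hd'
  set e := PresentedGroup.of (rels := UncRels σ3 (id : ZMod 3 → ZMod 3)) ((2 : ZMod 3), (0 : ZMod 3)) with he'
  set f := PresentedGroup.of (rels := UncRels σ3 (id : ZMod 3 → ZMod 3)) ((2 : ZMod 3), (1 : ZMod 3)) with hf'
  have hψ0 : ψ X0 = a := by simp [ψ, X0, ha']
  have hψ1 : ψ X1 = c := by simp [ψ, X1, hc']
  have Ra : a = b * c := by
    have := of_rel 0 1 2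
    norm_num at this
    rw [of_diag 2, mul_one] at this
    exact this
  have Rb : b = a * e := by
    have := of_rel 0 2 1
    norm_num at this
    rw [show ((4:ZMod 3)) = 1 from by decide] at this
    rw [of_diag 1, mul_one] at this
    exact this
  have Rc : c = d * a := by
    have := of_rel 1 0 2
    norm_num at this
    rw [show ((-1:ZMod 3)) = 2 from by decide, show ((3:ZMod 3)) = 0 from by decide,
      show ((4:ZMod 3)) = 1 from by decide] at this
    rw [of_diag 2, mul_one] at this
    exact this
  have Rd : d = c * f := by
    have := of_rel 1 2 0
    norm_num at this
    rw [show ((3:ZMod 3)) = 0 from by decide, show ((-1:ZMod 3)) = 2 from by decide,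
      show ((-2:ZMod 3)) = 1 from by decide] at this
    rw [of_diag 0, mul_one] at this
    exact this
  have he : e = c⁻¹ := by
    have h : a = a * e * c := by rw [← Rb, ← Ra]
    have : 1 = e * c := by
      conv_lhs at h => rw [← mul_one a]
      rw [mul_assoc] at h
      exact mul_left_cancel h
    rw [eq_comm, mul_eq_one_iff_eq_inv] at this
    exact this
  have hf : f = a⁻¹ := by
    have h : c = c * f * a := by rw [← Rd, ← Rc]
    have : 1 = f * a := by
      conv_lhs at h => rw [← mul_one c]
      rw [mul_assoc] at h
      exact mul_left_cancel h
    rw [eq_comm, mul_eq_one_iff_eq_inv] at this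
    exact this
  have hb : b = a * c⁻¹ := by rw [Rb, he]
  have hd : d = c * a⁻¹ := by rw [Rc]; group
  have h3 : ∀ x : ZMod 3, x = 0 ∨ x = 1 ∨ x = 2 := by decide
  rintro ⟨x, y⟩
  rcases h3 x with rfl | rfl | rfl <;> rcases h3 y with rfl | rfl | rfl
  · rw [show F (0, 0) = 1 from rfl, map_one, of_diag]
  · rw [show F (0, 1) = X0 from rfl, hψ0]
  · rw [show F (0, 2) = X0 * X1⁻¹ from rfl, map_mul, map_inv, hψ0, hψ1, ← hb]
  · rw [show F (1, 0) = X1 from rfl, hψ1]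
  · rw [show F (1, 1) = 1 from rfl, map_one, of_diag]
  · rw [show F (1, 2) = X1 * X0⁻¹ from rfl, map_mul, map_inv, hψ0, hψ1, ← hd]
  · rw [show F (2, 0) = X1⁻¹ from rfl, map_inv, hψ1, ← he]
  · rw [show F (2, 1) = X0⁻¹ from rfl, map_inv, hψ0, ← hf]
  · rw [show F (2, 2) = 1 from rfl, map_one, of_diag]

end UncD3

/-- For the dihedral quandle biquandle `σ(x,y) = (y, 2y−x)` on `ℤ/3ℤ` (associated
map the identity), `U_nc` is free on two generators. -/
theorem unc_dihedral_zmod3 :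
    Nonempty (Unc (fun q : ZMod 3 × ZMod 3 => (q.2, 2 * q.2 - q.1))
      (id : ZMod 3 → ZMod 3) ≃* FreeGroup (Fin 2)) := by
  refine ⟨MonoidHom.toMulEquiv UncD3.φ UncD3.ψ ?_ ?_⟩
  · apply PresentedGroup.ext
    intro p
    simp only [MonoidHom.comp_apply, MonoidHom.id_apply]
    rw [show UncD3.φ (PresentedGroup.of p) = UncD3.F p from PresentedGroup.toGroup.of _]
    exact UncD3.ψF p
  · apply FreeGroup.ext_hom
    intro i
    simp only [MonoidHom.comp_apply, MonoidHom.id_apply]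
    fin_cases i
    · show UncD3.φ (UncD3.ψ (FreeGroup.of 0)) = FreeGroup.of 0
      rw [show UncD3.ψ (FreeGroup.of 0) = PresentedGroup.of ((0:ZMod 3),(1:ZMod 3)) from by
        simp [UncD3.ψ]]
      exact PresentedGroup.toGroup.of _
    · show UncD3.φ (UncD3.ψ (FreeGroup.of 1)) = FreeGroup.of 1
      rw [show UncD3.ψ (FreeGroup.of 1) = PresentedGroup.of ((1:ZMod 3),(0:ZMod 3)) from by
        simp [UncD3.ψ]]
      exact PresentedGroup.toGroup.of _
end
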